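/- Let R be a commutative ring of prime characteristic p, let e ≥ 1, and let φ : F^e_* R → R be a surjective R-linear map. Then every φ-compatible ideal of R is a radical ideal. -/

import Mathlib

/-- Every ideal compatible with a surjective `R`-linear map `φ : F^e_* R → R`
is radical. -/
theorem stmt_2 {R : Type*} [CommRing R] (p : ℕ) (hp : p.Prime) [CharP R p]
    (e : ℕ) (he : 1 ≤ e)
    (φ : R → R)
    (hadd : ∀ x y : R, φ (x + y) = φ x + φ y)
    (hlin : ∀ r x : R, φ (r ^ p ^ e * x) = r * φ x)
    (hsurj : Function.Surjective φ)
    (J : Ideal R) (hJ : ∀ x ∈ J, φ x ∈ J) :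
    J.IsRadical := by
  -- key step: p^e-th roots
  obtain ⟨x, hx⟩ := hsurj 1
  have step : ∀ r : R, r ^ p ^ e ∈ J → r ∈ J := by
    intro r h
    have h2 := hJ (r ^ p ^ e * x) (J.mul_mem_right x h)
    rwa [hlin, hx, mul_one] at h2
  have iter : ∀ (k : ℕ) (r : R), r ^ (p ^ e) ^ k ∈ J → r ∈ J := by
    intro k
    induction k with
    | zero => intro r h; simpa using h
    | succ k ih =>
      intro r h
      apply step
      apply ih
      rw [← pow_mul, ← pow_succ']
      exact h
  intro r hr
  obtain ⟨n, hn⟩ := hr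
  apply iter n
  have h2 : 2 ≤ p ^ e := le_trans hp.two_le (Nat.le_self_pow (by omega) p)
  have hle : n ≤ (p ^ e) ^ n :=
    le_trans (Nat.lt_two_pow_self (n := n)).le (Nat.pow_le_pow_left h2 n)
  have key : r ^ (p ^ e) ^ n = r ^ n * r ^ ((p ^ e) ^ n - n) := by
    rw [← pow_add, Nat.add_sub_cancel' hle]
  rw [key]
  exact J.mul_mem_right _ hn
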